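/- Let 1 < p < 2 ≤ n with p < 2n/(n+1), let 0 < l ≤ p, and set β = 1/(2-p) and δ = n - (βl+1)(p-1) - 1. Then δ > 0, and there exists C > 0 (namely C = (β / (δ(βl)^{p-1}))^{1/(p-2)}) such that the function u(x,t) = C((-t)/|x|^l)^β satisfies the pointwise classical supersolution inequality ∂_t u(x,t) - Δ_p u(x,t) ≥ 0 at every point (x,t) with 0 < -t < |x|^l and |x| < 1. -/

import Mathlib

open MeasureTheory Real Set

/-- Classical divergence of a vector field on ℝⁿ. -/
noncomputable def divergence (n : ℕ)
    (F : EuclideanSpace ℝ (Fin n) → EuclideanSpace ℝ (Fin n))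
    (x : EuclideanSpace ℝ (Fin n)) : ℝ :=
  ∑ i, (inner ℝ (fderiv ℝ F x (EuclideanSpace.single i 1)) (EuclideanSpace.single i 1) : ℝ)

/-- The p-Laplacian Δ_p u = div(|∇u|^{p-2} ∇u), computed classically. -/
noncomputable def pLap (n : ℕ) (p : ℝ) (u : EuclideanSpace ℝ (Fin n) → ℝ)
    (x : EuclideanSpace ℝ (Fin n)) : ℝ :=
  divergence n (fun y => ‖gradient u y‖ ^ (p - 2) • gradient u y) x

variable {E : Type*} [NormedAddCommGroup E] [InnerProductSpace ℝ E]

lemma my_hasFDerivAt_norm_rpow (a : ℝ) {x : E} (hx : x ≠ 0) :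
    HasFDerivAt (fun y : E => ‖y‖ ^ a) ((a * ‖x‖ ^ (a - 2)) • (innerSL ℝ x)) x := by
  have hnx : (0:ℝ) < ‖x‖ := norm_pos_iff.2 hx
  have hpos : (0:ℝ) < (inner ℝ x x : ℝ) := by rw [real_inner_self_eq_norm_sq]; exact pow_pos hnx 2
  have key : ∀ y : E, ‖y‖ ^ a = (inner ℝ y y : ℝ) ^ (a / 2) := by
    intro y
    rw [real_inner_self_eq_norm_sq, ← Real.rpow_natCast ‖y‖ 2, ← Real.rpow_mul (norm_nonneg y)]
    congr 1
    push_cast; ring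
  have hφ : HasFDerivAt (fun y : E => (inner ℝ y y : ℝ))
      ((fderivInnerCLM ℝ (x, x)).comp ((ContinuousLinearMap.id ℝ E).prod
        (ContinuousLinearMap.id ℝ E))) x :=
    (hasFDerivAt_id x).inner ℝ (hasFDerivAt_id x)
  have hg : HasDerivAt (fun s : ℝ => s ^ (a / 2)) ((a / 2) * (inner ℝ x x : ℝ) ^ (a / 2 - 1))
      (inner ℝ x x : ℝ) := by
    have := Real.hasDerivAt_rpow_const (x := (inner ℝ x x : ℝ)) (p := a / 2)
      (Or.inl (ne_of_gt hpos))
    simpa [mul_comm] using this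
  have hcomp := HasDerivAt.comp_hasFDerivAt (f := fun y : E => (inner ℝ y y : ℝ)) x hg hφ
  have heq : (fun y : E => ‖y‖ ^ a) = fun y : E => (inner ℝ y y : ℝ) ^ (a / 2) := funext key
  rw [heq]
  refine hcomp.congr_fderiv ?_
  ext v
  simp only [ContinuousLinearMap.smul_apply, innerSL_apply_apply, ContinuousLinearMap.coe_comp',
    Function.comp_apply, ContinuousLinearMap.smul_apply, fderivInnerCLM_apply,
    ContinuousLinearMap.prod_apply, ContinuousLinearMap.coe_id', id_eq]
  rw [real_inner_self_eq_norm_sq, ← Real.rpow_natCast ‖x‖ 2,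
    ← Real.rpow_mul (norm_nonneg x), smul_eq_mul, smul_eq_mul,
    show ((2:ℕ):ℝ) * (a/2 - 1) = a - 2 by push_cast; ring, real_inner_comm x v]
  ring

lemma my_hasGradientAt_norm_rpow [CompleteSpace E] (A a : ℝ) {x : E} (hx : x ≠ 0) :
    HasGradientAt (fun y : E => A * ‖y‖ ^ a) ((A * (a * ‖x‖ ^ (a - 2))) • x) x := by
  rw [hasGradientAt_iff_hasFDerivAt]
  have h := (my_hasFDerivAt_norm_rpow a hx).const_mul A
  refine h.congr_fderiv ?_
  ext v
  simp only [InnerProductSpace.toDual_apply_apply, ContinuousLinearMap.smul_apply, innerSL_apply_apply,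
    real_inner_smul_left, smul_eq_mul]
  ring

lemma divergence_radial (n : ℕ) (k m : ℝ) {x : EuclideanSpace ℝ (Fin n)} (hx : x ≠ 0)
    (F : EuclideanSpace ℝ (Fin n) → EuclideanSpace ℝ (Fin n))
    (hF : F =ᶠ[nhds x] (fun y => (k * ‖y‖ ^ m) • y)) :
    divergence n F x = k * ((n : ℝ) + m) * ‖x‖ ^ m := by
  have hnx : (0:ℝ) < ‖x‖ := norm_pos_iff.2 hx
  have hs : HasFDerivAt (fun y : EuclideanSpace ℝ (Fin n) => k * ‖y‖ ^ m)
      ((k * (m * ‖x‖ ^ (m - 2))) • innerSL ℝ x) x := by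
    have h := (my_hasFDerivAt_norm_rpow m hx).const_mul k
    rw [smul_smul] at h
    exact h
  have hG : HasFDerivAt (fun y : EuclideanSpace ℝ (Fin n) => (k * ‖y‖ ^ m) • y)
      ((k * ‖x‖ ^ m) • ContinuousLinearMap.id ℝ _ +
        ((k * (m * ‖x‖ ^ (m - 2))) • innerSL ℝ x).smulRight x) x :=
    hs.smul (hasFDerivAt_id x)
  have hF' : HasFDerivAt F ((k * ‖x‖ ^ m) • ContinuousLinearMap.id ℝ _ +
      ((k * (m * ‖x‖ ^ (m - 2))) • innerSL ℝ x).smulRight x) x :=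
    hG.congr_of_eventuallyEq hF
  unfold divergence
  rw [hF'.fderiv]
  have hsum : ∀ i : Fin n,
      (inner ℝ (((k * ‖x‖ ^ m) • ContinuousLinearMap.id ℝ (EuclideanSpace ℝ (Fin n)) +
        ((k * (m * ‖x‖ ^ (m - 2))) • innerSL ℝ x).smulRight x)
          (EuclideanSpace.single i (1:ℝ))) (EuclideanSpace.single i (1:ℝ)) : ℝ)
      = k * ‖x‖ ^ m + (k * (m * ‖x‖ ^ (m - 2))) * (x i * x i) := by
    intro i
    simp only [ContinuousLinearMap.add_apply, ContinuousLinearMap.smul_apply,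
      ContinuousLinearMap.coe_id', id_eq, ContinuousLinearMap.smulRight_apply,
      innerSL_apply_apply, inner_add_left, real_inner_smul_left, smul_eq_mul]
    have h1 : (inner ℝ (EuclideanSpace.single i (1:ℝ)) (EuclideanSpace.single i (1:ℝ)) : ℝ) = 1 := by
      simp [EuclideanSpace.inner_single_left, EuclideanSpace.single_apply]
    have h2 : (inner ℝ x (EuclideanSpace.single i (1:ℝ)) : ℝ) = x i := by
      simp [EuclideanSpace.inner_single_right]
    rw [h1, h2]; ring
  rw [Finset.sum_congr rfl (fun i _ => hsum i), Finset.sum_add_distrib]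
  have hx2 : ∑ i : Fin n, (k * (m * ‖x‖ ^ (m - 2))) * (x i * x i)
      = (k * (m * ‖x‖ ^ (m - 2))) * ‖x‖ ^ (2:ℕ) := by
    rw [← Finset.mul_sum]
    congr 1
    rw [← real_inner_self_eq_norm_sq]
    simp only [PiLp.inner_apply, RCLike.inner_apply, conj_trivial]
  rw [hx2]
  simp only [Finset.sum_const, Finset.card_univ, Fintype.card_fin, nsmul_eq_mul]
  rw [← Real.rpow_natCast ‖x‖ 2]
  have hmm : ‖x‖ ^ (m - 2) * ‖x‖ ^ ((2:ℕ):ℝ) = ‖x‖ ^ m := by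
    rw [← Real.rpow_add hnx]; norm_num
  rw [show k * (m * ‖x‖ ^ (m - 2)) * ‖x‖ ^ ((2:ℕ):ℝ)
      = k * m * (‖x‖ ^ (m - 2) * ‖x‖ ^ ((2:ℕ):ℝ)) by ring, hmm]
  ring

lemma pLap_radial (n : ℕ) (p A e : ℝ) (hA : 0 < A) (he : e < 0)
    {x : EuclideanSpace ℝ (Fin n)} (hx : x ≠ 0) :
    pLap n p (fun y => A * ‖y‖ ^ e) x
      = ((A * (-e)) ^ (p - 1) * (-1)) * ((n : ℝ) + ((e - 1) * (p - 2) + (e - 2)))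
          * ‖x‖ ^ ((e - 1) * (p - 2) + (e - 2)) := by
  set k : ℝ := (A * (-e)) ^ (p - 2) * (A * e) with hk
  set m : ℝ := (e - 1) * (p - 2) + (e - 2) with hm
  have hF : (fun y => ‖gradient (fun y : EuclideanSpace ℝ (Fin n) => A * ‖y‖ ^ e) y‖ ^ (p - 2)
        • gradient (fun y : EuclideanSpace ℝ (Fin n) => A * ‖y‖ ^ e) y)
      =ᶠ[nhds x] (fun y => (k * ‖y‖ ^ m) • y) := by
    filter_upwards [eventually_ne_nhds hx] with y hy
    have hny : (0:ℝ) < ‖y‖ := norm_pos_iff.2 hy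
    have hgrad : gradient (fun y : EuclideanSpace ℝ (Fin n) => A * ‖y‖ ^ e) y
        = (A * (e * ‖y‖ ^ (e - 2))) • y := (my_hasGradientAt_norm_rpow A e hy).gradient
    rw [hgrad]
    have hcneg : A * (e * ‖y‖ ^ (e - 2)) < 0 := by
      have h := Real.rpow_pos_of_pos hny (e - 2)
      exact mul_neg_of_pos_of_neg hA (mul_neg_of_neg_of_pos he h)
    have hnorm : ‖(A * (e * ‖y‖ ^ (e - 2))) • y‖ = (A * (-e)) * ‖y‖ ^ (e - 1) := by
      rw [norm_smul, Real.norm_eq_abs, abs_of_neg hcneg,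
        show e - 1 = (e - 2) + 1 by ring, Real.rpow_add hny, Real.rpow_one]
      ring
    rw [hnorm, smul_smul]
    congr 1
    have hAe : (0:ℝ) < A * (-e) := by nlinarith
    rw [Real.mul_rpow hAe.le (Real.rpow_pos_of_pos hny (e-1)).le,
      ← Real.rpow_mul (norm_nonneg y), hk, hm, Real.rpow_add hny]
    ring
  rw [pLap, divergence_radial n k m hx _ hF]
  have hAe : (0:ℝ) < A * (-e) := by nlinarith
  have : k = (A * (-e)) ^ (p - 1) * (-1) := by
    rw [hk, show p - 1 = (p - 2) + 1 by ring, Real.rpow_add hAe, Real.rpow_one]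
    ring
  rw [this]

set_option maxHeartbeats 1000000 in
theorem soda_can_supersolution_singular (n : ℕ) (p l : ℝ) (hn : 2 ≤ n)
    (hp1 : 1 < p) (hp2 : p < 2 * (n : ℝ) / ((n : ℝ) + 1))
    (hl0 : 0 < l) (hlp : l ≤ p) :
    0 < (n : ℝ) - (1 / (2 - p) * l + 1) * (p - 1) - 1 ∧
    ∃ C : ℝ, 0 < C ∧
      C = ((1 / (2 - p)) /
            (((n : ℝ) - (1 / (2 - p) * l + 1) * (p - 1) - 1) *
              ((1 / (2 - p)) * l) ^ (p - 1))) ^ (1 / (p - 2)) ∧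
      ∀ (x : EuclideanSpace ℝ (Fin n)) (t : ℝ),
        0 < -t → -t < ‖x‖ ^ l → ‖x‖ < 1 →
        0 ≤ deriv (fun s => C * ((-s) / ‖x‖ ^ l) ^ (1 / (2 - p))) t
              - pLap n p (fun y => C * ((-t) / ‖y‖ ^ l) ^ (1 / (2 - p))) x := by
  have hnpos : (0:ℝ) < (n:ℝ) + 1 := by positivity
  have hkey : p * ((n:ℝ) + 1) < 2 * n := by
    rw [lt_div_iff₀ hnpos] at hp2; linarith [hp2]
  have hn2 : (2:ℝ) ≤ (n:ℝ) := by exact_mod_cast hn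
  have h2p : (0:ℝ) < 2 - p := by nlinarith
  set β : ℝ := 1 / (2 - p) with hβdef
  have hβ : 0 < β := by positivity
  have hβ2 : β * (2 - p) = 1 := by rw [hβdef, one_div, inv_mul_cancel₀ h2p.ne']
  set δ : ℝ := (n : ℝ) - (β * l + 1) * (p - 1) - 1 with hδdef
  have hβl : β * l * (2 - p) = l := by
    rw [hβdef]; field_simp
  have hn2p : p < (n:ℝ) * (2 - p) := by nlinarith
  have hδ : 0 < δ := by
    have h1 : δ * (2 - p) = (n:ℝ) * (2 - p) - l * (p - 1) - p * (2 - p) := by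
      rw [hδdef]; linear_combination (1 - p) * hβl
    have hlp' : l * (p - 1) ≤ p * (p - 1) :=
      mul_le_mul_of_nonneg_right hlp (by linarith)
    have h2 : 0 < δ * (2 - p) := by nlinarith [hlp']
    have h3 := div_pos h2 h2p
    rwa [mul_div_assoc, div_self (ne_of_gt h2p), mul_one] at h3
  have hβlpos : 0 < β * l := mul_pos hβ hl0
  set B : ℝ := β / (δ * (β * l) ^ (p - 1)) with hBdef
  have hB : 0 < B := by
    have := Real.rpow_pos_of_pos hβlpos (p - 1)
    exact div_pos hβ (mul_pos hδ this)
  set C : ℝ := B ^ (1 / (p - 2)) with hCdef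
  have hC : 0 < C := Real.rpow_pos_of_pos hB _
  refine ⟨hδ, C, hC, rfl, ?_⟩
  have hp2ne : p - 2 ≠ 0 := by intro h; rw [sub_eq_zero] at h; rw [h] at h2p; linarith
  have hCpm2 : C ^ (p - 2) = B := by
    rw [hCdef, ← Real.rpow_mul hB.le, one_div_mul_cancel hp2ne, Real.rpow_one]
  have hCp1 : C ^ (p - 1) = B * C := by
    rw [show p - 1 = (p - 2) + 1 by ring, Real.rpow_add hC, Real.rpow_one, hCpm2]
  have hδβl : δ * (β * l) ^ (p - 1) ≠ 0 :=
    ne_of_gt (mul_pos hδ (Real.rpow_pos_of_pos hβlpos (p - 1)))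
  have hCkey : C ^ (p - 1) * ((β * l) ^ (p - 1) * δ) = C * β := by
    rw [hCp1, hBdef]; field_simp
  intro x t ht htR hx1
  have hx0 : x ≠ 0 := by
    intro h
    rw [h, norm_zero, Real.zero_rpow (ne_of_gt hl0)] at htR
    linarith
  have hnx : 0 < ‖x‖ := norm_pos_iff.2 hx0
  have hR : 0 < ‖x‖ ^ l := Real.rpow_pos_of_pos hnx l
  -- time derivative
  have h1 : HasDerivAt (fun s : ℝ => (-s) / ‖x‖ ^ l) (-1 / ‖x‖ ^ l) t := by
    simpa using ((hasDerivAt_id t).neg.div_const (‖x‖ ^ l))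
  have hbase : (0:ℝ) < (-t) / ‖x‖ ^ l := div_pos ht hR
  have h2 : HasDerivAt (fun z : ℝ => z ^ β) (β * ((-t) / ‖x‖ ^ l) ^ (β - 1)) ((-t) / ‖x‖ ^ l) :=
    Real.hasDerivAt_rpow_const (Or.inl (ne_of_gt hbase))
  have hderiv : HasDerivAt (fun s : ℝ => C * ((-s) / ‖x‖ ^ l) ^ β)
      (C * (β * ((-t) / ‖x‖ ^ l) ^ (β - 1) * (-1 / ‖x‖ ^ l))) t := by
    have h3 := (h2.comp t h1).const_mul C
    simpa [Function.comp, mul_assoc] using h3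
  rw [hderiv.deriv]
  -- spatial part
  set A : ℝ := C * (-t) ^ β with hAdef
  have hA : 0 < A := mul_pos hC (Real.rpow_pos_of_pos ht β)
  have hu : (fun y : EuclideanSpace ℝ (Fin n) => C * ((-t) / ‖y‖ ^ l) ^ β)
      = fun y => A * ‖y‖ ^ (-(l * β)) := by
    funext y
    rcases eq_or_ne y 0 with hy | hy
    · rw [hy, norm_zero, Real.zero_rpow (ne_of_gt hl0), div_zero,
        Real.zero_rpow (ne_of_gt hβ),
        Real.zero_rpow (neg_ne_zero.2 (ne_of_gt (mul_pos hl0 hβ))), mul_zero, mul_zero]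
    · have hny : 0 < ‖y‖ := norm_pos_iff.2 hy
      rw [Real.div_rpow ht.le (Real.rpow_pos_of_pos hny l).le,
        Real.rpow_neg (norm_nonneg y), ← Real.rpow_mul (norm_nonneg y), hAdef]
      rw [div_eq_mul_inv]
      ring
  rw [hu, pLap_radial n p A (-(l * β)) hA (neg_lt_zero.2 (mul_pos hl0 hβ)) hx0]
  simp only [neg_neg]
  set M : ℝ := (-(l * β) - 1) * (p - 2) + (-(l * β) - 2) with hMdef
  have hnM : (n:ℝ) + M = δ := by rw [hMdef, hδdef]; ring
  have hexp : β * (p - 1) = β - 1 := by linear_combination -hβ2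
  -- rewrite the deriv value
  have hEqD : C * (β * ((-t) / ‖x‖ ^ l) ^ (β - 1) * (-1 / ‖x‖ ^ l))
      = -(C * β) * (-t) ^ (β - 1) * ‖x‖ ^ (-(l * β)) := by
    rw [Real.div_rpow ht.le hR.le, Real.rpow_neg (norm_nonneg x),
      ← Real.rpow_mul (norm_nonneg x)]
    have hne1 : ‖x‖ ^ (l * (β - 1)) ≠ 0 := ne_of_gt (Real.rpow_pos_of_pos hnx _)
    have hne2 : ‖x‖ ^ l ≠ 0 := ne_of_gt hR
    have hne3 : ‖x‖ ^ (l * β) ≠ 0 := ne_of_gt (Real.rpow_pos_of_pos hnx _)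
    have hcomb : ‖x‖ ^ (l * (β - 1)) * ‖x‖ ^ l = ‖x‖ ^ (l * β) := by
      rw [← Real.rpow_add hnx]; congr 1; ring
    rw [← hcomb, mul_inv, div_eq_mul_inv, div_eq_mul_inv]
    ring
  have hEqP : (A * (l * β)) ^ (p - 1) * (-1) * ((n:ℝ) + M) * ‖x‖ ^ M
      = -(C * β) * (-t) ^ (β - 1) * ‖x‖ ^ M := by
    rw [hnM, hAdef, Real.mul_rpow (mul_pos hC (Real.rpow_pos_of_pos ht β)).le
        (mul_pos hl0 hβ).le,
      Real.mul_rpow hC.le (Real.rpow_pos_of_pos ht β).le,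
      ← Real.rpow_mul ht.le, hexp, mul_comm l β]
    have hsplit : (-t) ^ (β - 1) = (-t) ^ (β - 1) := rfl
    linear_combination (-((-t) ^ (β - 1) * ‖x‖ ^ M)) * hCkey
  rw [hEqD, hEqP]
  have hMe : M = -(l * β) + (l - p) := by rw [hMdef]; linear_combination l * hβ2
  rw [hMe, Real.rpow_add hnx]
  have hone : 1 ≤ ‖x‖ ^ (l - p) :=
    Real.one_le_rpow_of_pos_of_le_one_of_nonpos hnx hx1.le (by linarith)
  have ha : 0 ≤ C * β * (-t) ^ (β - 1) * ‖x‖ ^ (-(l * β)) :=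
    mul_nonneg (mul_nonneg (mul_nonneg hC.le hβ.le)
      (Real.rpow_pos_of_pos ht (β - 1)).le) (Real.rpow_pos_of_pos hnx (-(l * β))).le
  nlinarith [mul_nonneg ha (sub_nonneg.2 hone)]
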